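/- (Lexmax Nash equilibrium of Alice) Let 𝓐 and 𝓑 be dual families of subsets of a common finite ground set O, let g : 𝓐 × 𝓑 → O be a tight game form, and let ≻_a and ≻_b be linear orders on O. Let A⁰ ∈ 𝓐 be a lexmax edge with respect to the lexicographic order induced by ≻_a, and let o⁰ be the ≻_b-maximal element of A⁰. Then there exists B⁰ ∈ 𝓑 such that A⁰ ∩ B⁰ = {o⁰} (hence g(A⁰,B⁰) = o⁰) and the pair (A⁰, B⁰) is a Nash equilibrium of the game (g, ≻_a, ≻_b). -/

import Mathlib

/-- `𝓐` is dual to `𝓑`: (i) every edge of `𝓐` meets every edge of `𝓑`, and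
(iv a) every subset of the ground set meeting all edges of `𝓑` contains an edge of `𝓐`. -/
def Dual {α : Type*} [DecidableEq α] (𝓐 𝓑 : Set (Finset α)) : Prop :=
  (∀ A ∈ 𝓐, ∀ B ∈ 𝓑, (A ∩ B).Nonempty) ∧
    (∀ T : Finset α, (∀ B ∈ 𝓑, (T ∩ B).Nonempty) → ∃ A ∈ 𝓐, A ⊆ T)

/-- `LexGtR r X Y` means `X ≻_L Y` with respect to the linear order `r`: the subsets are
distinct and the `r`-smallest element of the symmetric difference belongs to `Y`. -/
def LexGtR {α : Type*} [DecidableEq α] (r : LinearOrder α) (X Y : Finset α) : Prop :=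
  ∃ o ∈ Y, o ∉ X ∧ ∀ o' ∈ (X \ Y) ∪ (Y \ X), r.le o o'

/-- Lexmax Nash equilibrium of Alice: if `A⁰` is lexmax for Alice's preference `≻_a`
and `o⁰` is Bob's best outcome in `A⁰`, then there is a strategy `B⁰` of Bob with
`A⁰ ∩ B⁰ = {o⁰}`, and `(A⁰, B⁰)` is a Nash equilibrium. -/
theorem lexmax_nash_equilibrium {α : Type*} [Fintype α] [DecidableEq α]
    (𝓐 𝓑 : Set (Finset α)) (h : Dual 𝓐 𝓑)
    (g : 𝓐 → 𝓑 → α)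
    (hg : ∀ (A : 𝓐) (B : 𝓑), g A B ∈ (A : Finset α) ∩ (B : Finset α))
    (ra rb : LinearOrder α)
    (A0 : Finset α) (hA0 : A0 ∈ 𝓐)
    (hlex : ∀ A ∈ 𝓐, LexGtR ra A0 A ∨ A0 = A)
    (o0 : α) (ho0 : o0 ∈ A0) (hmax : ∀ o ∈ A0, rb.le o o0) :
    ∃ B0, ∃ hB0 : B0 ∈ 𝓑,
      A0 ∩ B0 = {o0} ∧
      g ⟨A0, hA0⟩ ⟨B0, hB0⟩ = o0 ∧
      (∀ A' : 𝓐, ra.le (g A' ⟨B0, hB0⟩) (g ⟨A0, hA0⟩ ⟨B0, hB0⟩)) ∧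
      (∀ B' : 𝓑, rb.le (g ⟨A0, hA0⟩ B') (g ⟨A0, hA0⟩ ⟨B0, hB0⟩)) := by
  classical
  set T : Finset α :=
    (Finset.univ.filter (fun o => ra.le o o0 ∧ o ∉ A0)) ∪ {o0} with hT
  have hTmem : ∀ o, o ∈ T ↔ ((ra.le o o0 ∧ o ∉ A0) ∨ o = o0) := by
    intro o; simp [hT]; exact or_comm
  have ho0T : o0 ∈ T := (hTmem o0).2 (Or.inr rfl)
  -- first, find B0 ∈ 𝓑 with B0 ⊆ T
  have hexB : ∃ B0 ∈ 𝓑, B0 ⊆ T := by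
    by_contra hB
    have hmeet : ∀ B ∈ 𝓑, ((Finset.univ \ T) ∩ B).Nonempty := by
      intro B hBmem
      by_contra hne
      apply hB
      refine ⟨B, hBmem, ?_⟩
      intro x hx
      by_contra hxT
      exact hne ⟨x, Finset.mem_inter.2
        ⟨Finset.mem_sdiff.2 ⟨Finset.mem_univ x, hxT⟩, hx⟩⟩
    obtain ⟨A, hA, hAsub⟩ := h.2 _ hmeet
    rcases hlex A hA with hgt | heq
    · obtain ⟨o, hoA, hoA0, hmin⟩ := hgt
      have hoT : o ∉ T := (Finset.mem_sdiff.1 (hAsub hoA)).2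
      have hnle : ¬ ra.le o o0 := by
        intro hle
        exact hoT ((hTmem o).2 (Or.inl ⟨hle, hoA0⟩))
      have ho0A : o0 ∉ A := fun hx => (Finset.mem_sdiff.1 (hAsub hx)).2 ho0T
      exact hnle (hmin o0 (Finset.mem_union.2
        (Or.inl (Finset.mem_sdiff.2 ⟨ho0, ho0A⟩))))
    · have : o0 ∈ A := heq ▸ ho0
      exact (Finset.mem_sdiff.1 (hAsub this)).2 ho0T
  obtain ⟨B0, hB0, hsub⟩ := hexB
  have hinter : A0 ∩ B0 = {o0} := by
    apply Finset.Subset.antisymm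
    · intro x hx
      rcases Finset.mem_inter.1 hx with ⟨hxA, hxB⟩
      rcases (hTmem x).1 (hsub hxB) with ⟨_, hxnA⟩ | hxe
      · exact absurd hxA hxnA
      · simp [hxe]
    · rw [Finset.singleton_subset_iff]
      obtain ⟨y, hy⟩ := h.1 A0 hA0 B0 hB0
      rcases Finset.mem_inter.1 hy with ⟨hyA, hyB⟩
      have : y = o0 := by
        rcases (hTmem y).1 (hsub hyB) with ⟨_, hynA⟩ | hye
        · exact absurd hyA hynA
        · exact hye
      exact this ▸ Finset.mem_inter.2 ⟨hyA, hyB⟩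
  have hgval : g ⟨A0, hA0⟩ ⟨B0, hB0⟩ = o0 := by
    have := hg ⟨A0, hA0⟩ ⟨B0, hB0⟩
    rw [hinter] at this
    exact Finset.mem_singleton.1 this
  refine ⟨B0, hB0, hinter, hgval, ?_, ?_⟩
  · intro A'
    rw [hgval]
    have hmem := hg A' ⟨B0, hB0⟩
    have hB : g A' ⟨B0, hB0⟩ ∈ B0 := (Finset.mem_inter.1 hmem).2
    rcases (hTmem _).1 (hsub hB) with ⟨hle, _⟩ | heq
    · exact hle
    · rw [heq]; exact ra.le_refl o0
  · intro B'
    rw [hgval]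
    exact hmax _ (Finset.mem_inter.1 (hg ⟨A0, hA0⟩ B')).1
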